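/- Let KB = (L, Π) be an FOL-program. The operator W_KB : 2^{Lit_Π} → 2^{Lit_Π} defined by W_KB(I) = T_KB(I) ∪ ¬.U_KB(I) ∪ ¬.Z_KB(I) is monotone on the complete lattice (2^{Lit_Π}, ⊆), and hence its least fixpoint lfp(W_KB) (the well-founded semantics of KB) exists. -/

import Mathlib

/-!
Formalization of FOL-programs (combined knowledge bases `KB = (L, Π)` of a
first-order theory and a ground rule base) and their well-founded semantics.

* The Herbrand base `HB_Π` is modelled as a type `Atom`; each atom `a` has an
  associated first-order sentence `toSent a`, and `inOmega a` says whether the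
  predicate symbol of `a` is in the shared set `Ω` (atoms with `¬ inOmega a`
  are the *ordinary* atoms).
* The field `atomic` expresses that atoms are genuinely atomic ground
  sentences: every consistent set of literals is a satisfiable theory.
* Literals `Lit Atom = Atom ⊕ Atom`: `Sum.inl a` is the atom `a`,
  `Sum.inr a` is the negated atom `¬ a`.
-/

open FirstOrder

namespace FOLProg

variable {L : FirstOrder.Language} {Atom : Type*}

/-- Literals over the Herbrand base: `Sum.inl a` is `a`, `Sum.inr a` is `¬ a`. -/
abbrev Lit (Atom : Type*) := Atom ⊕ Atom

/-- A body element of a rule: an atom of the Herbrand base, or an FOL sentence. -/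
inductive BElem (L : FirstOrder.Language) (Atom : Type*) where
  | atom : Atom → BElem L Atom
  | fol : L.Sentence → BElem L Atom

/-- A ground rule `head ← pos, not neg`. -/
structure Rule (L : FirstOrder.Language) (Atom : Type*) where
  head : Atom
  pos : Set (BElem L Atom)
  neg : Set (BElem L Atom)

/-- `S⁺`. -/
def litPos (S : Set (Lit Atom)) : Set Atom := {a | Sum.inl a ∈ S}

/-- `S⁻`. -/
def litNeg (S : Set (Lit Atom)) : Set Atom := {a | Sum.inr a ∈ S}

/-- A set of literals is consistent: `S⁺ ∩ S⁻ = ∅`. -/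
def LitConsistent (S : Set (Lit Atom)) : Prop := litPos S ∩ litNeg S = ∅

/-- The theory of *all* literals of `S` (positive atoms as their sentences,
negative ones negated). -/
def litTheory (toSent : Atom → L.Sentence) (S : Set (Lit Atom)) : L.Theory :=
  toSent '' litPos S ∪ (fun a => (toSent a).not) '' litNeg S

/-- An FOL-program `KB = (L, Π)` over the Herbrand base `Atom`. -/
structure KB (L : FirstOrder.Language) (Atom : Type*) where
  /-- the first-order theory `L` -/
  theory : L.Theory
  /-- the first-order sentence of each ground atom of the Herbrand base -/
  toSent : Atom → L.Sentence
  /-- whether the predicate symbol of an atom belongs to `Ω` -/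
  inOmega : Atom → Prop
  /-- the rule base `Π` -/
  rules : Set (Rule L Atom)
  /-- atoms are atomic: any consistent set of ground literals is satisfiable -/
  atomic : ∀ S : Set (Lit Atom), LitConsistent S → (litTheory toSent S).IsSatisfiable

namespace KB

variable (kb : KB L Atom)

/-- `S|_Ω`, as a first-order theory. -/
def restrict (S : Set (Lit Atom)) : L.Theory :=
  kb.toSent '' {a | Sum.inl a ∈ S ∧ kb.inOmega a} ∪
    (fun a => (kb.toSent a).not) '' {a | Sum.inr a ∈ S ∧ kb.inOmega a}

/-- The theory `L ∪ S|_Ω`. -/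
def extTheory (S : Set (Lit Atom)) : L.Theory := kb.theory ∪ kb.restrict S

/-- `S` is consistent with `L` (equivalently, `S ∪ L` is consistent):
`S` is a consistent set of literals and `L ∪ S|_Ω` is satisfiable. -/
def ConsistentWith (S : Set (Lit Atom)) : Prop :=
  LitConsistent S ∧ (kb.extTheory S).IsSatisfiable

/-- The FOL-formulas among a set of body elements, as sentences: the explicit
FOL-formulas together with the (sentences of the) non-ordinary atoms. -/
def folOf (s : Set (BElem L Atom)) : Set L.Sentence :=
  {φ | BElem.fol φ ∈ s} ∪ kb.toSent '' {a | BElem.atom a ∈ s ∧ kb.inOmega a}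

/-- Conditions (a) and (b) of the definition of an unfounded set `U` of `KB`
relative to a set of literals `I` (the case where `I ∪ L` is consistent). -/
def UnfoundedCond (I : Set (Lit Atom)) (U : Set Atom) : Prop :=
  ∀ H ∈ U,
    (∀ r ∈ kb.rules, r.head = H →
      -- (i) `¬A ∈ I ∪ ¬.U` for some ordinary atom `A ∈ pos(r)`
      (∃ a, BElem.atom a ∈ r.pos ∧ ¬ kb.inOmega a ∧ (Sum.inr a ∈ I ∨ a ∈ U)) ∨
      -- (ii) `B ∈ I` for some ordinary atom `B ∈ neg(r)`
      (∃ b, BElem.atom b ∈ r.neg ∧ ¬ kb.inOmega b ∧ Sum.inl b ∈ I) ∨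
      -- (iii) some FOL-formula `A ∈ pos(r)` is not entailed under any
      -- consistent extension of `I ∪ ¬.U`
      (∃ φ ∈ kb.folOf r.pos, ∀ S : Set (Lit Atom), LitConsistent S →
        I ∪ Sum.inr '' U ⊆ S → ¬ kb.extTheory S ⊨ᵇ φ) ∨
      -- (iv) some FOL-formula `A ∈ neg(r)` with `L ∪ I|_Ω ⊨ A`
      (∃ φ ∈ kb.folOf r.neg, kb.extTheory I ⊨ᵇ φ)) ∧
    -- (b) `L ∪ S|_Ω ⊭ H` for all consistent `S ⊇ I ∪ ¬.U`
    (∀ S : Set (Lit Atom), LitConsistent S → I ∪ Sum.inr '' U ⊆ S →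
      ¬ kb.extTheory S ⊨ᵇ kb.toSent H)

/-- `U` is an unfounded set of `KB` relative to `I`.  If `I ∪ L` is
inconsistent, the unfounded set is (by definition) the whole Herbrand base. -/
def IsUnfounded (I : Set (Lit Atom)) (U : Set Atom) : Prop :=
  (kb.ConsistentWith I ∧ kb.UnfoundedCond I U) ∨
    (¬ kb.ConsistentWith I ∧ U = Set.univ)

/-- The consequence operator `T_KB`. -/
def TOp (I : Set (Lit Atom)) : Set Atom :=
  {H | ¬ kb.ConsistentWith I ∨
    -- (a) some rule `r` with `head(r) = H` whose body holds
    (∃ r ∈ kb.rules, r.head = H ∧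
      (∀ a, BElem.atom a ∈ r.pos → ¬ kb.inOmega a → Sum.inl a ∈ I) ∧
      (∀ a, BElem.atom a ∈ r.neg → ¬ kb.inOmega a → Sum.inr a ∈ I) ∧
      (∀ φ ∈ kb.folOf r.pos, kb.extTheory I ⊨ᵇ φ) ∧
      (∀ φ ∈ kb.folOf r.neg, ∀ S : Set (Lit Atom), LitConsistent S → I ⊆ S →
        ¬ kb.extTheory S ⊨ᵇ φ)) ∨
    -- (b) `L ∪ I|_Ω ⊨ H`
    kb.extTheory I ⊨ᵇ kb.toSent H}

/-- `U_KB(I)`: the greatest unfounded set of `KB` relative to `I`, i.e. the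
union of all unfounded sets of `KB` relative to `I`. -/
def UOp (I : Set (Lit Atom)) : Set Atom := ⋃₀ {U | kb.IsUnfounded I U}

/-- `Z_KB(I) = {A ∈ HB_Π | L ∪ I|_Ω ⊨ ¬A}`: direct negative consequences. -/
def ZOp (I : Set (Lit Atom)) : Set Atom :=
  {a | kb.extTheory I ⊨ᵇ (kb.toSent a).not}

/-- `W_KB(I) = T_KB(I) ∪ ¬.U_KB(I) ∪ ¬.Z_KB(I)`. -/
def WOp (I : Set (Lit Atom)) : Set (Lit Atom) :=
  Sum.inl '' kb.TOp I ∪ Sum.inr '' kb.UOp I ∪ Sum.inr '' kb.ZOp I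

/-- The well-founded semantics of `KB`: the least fixpoint of `W_KB`
(by Knaster–Tarski, the intersection of all prefixed points). -/
def wfs : Set (Lit Atom) := sInf {I | kb.WOp I ⊆ I}

/-! ### Standard notions for normal logic programs -/

/-- `KB = (∅, Π)` is a normal logic program: the first-order theory is empty
and every rule has only ordinary atoms in its head and body (hence `Ω = ∅`). -/
def IsNormal : Prop :=
  kb.theory = ∅ ∧ (∀ a : Atom, ¬ kb.inOmega a) ∧
    ∀ r ∈ kb.rules, ∀ e ∈ r.pos ∪ r.neg, ∃ a, e = BElem.atom a

/-- The standard immediate-consequence operator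
`T_Π(S) = {head(r) | r ∈ Π, pos(r) ∪ ¬.neg(r) ⊆ S}` of a normal program. -/
def StdT (S : Set (Lit Atom)) : Set Atom :=
  {H | ∃ r ∈ kb.rules, r.head = H ∧
    (∀ a, BElem.atom a ∈ r.pos → Sum.inl a ∈ S) ∧
    (∀ a, BElem.atom a ∈ r.neg → Sum.inr a ∈ S)}

/-- `U` is an unfounded set of the normal program `Π` w.r.t. `S` in the
standard sense. -/
def StdUnfounded (S : Set (Lit Atom)) (U : Set Atom) : Prop :=
  ∀ a ∈ U, ∀ r ∈ kb.rules, r.head = a →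
    (∃ b, BElem.atom b ∈ r.pos ∧ (Sum.inr b ∈ S ∨ b ∈ U)) ∨
    (∃ b, BElem.atom b ∈ r.neg ∧ Sum.inl b ∈ S)

/-- `U_Π(S)`: the greatest standard unfounded set of `Π` w.r.t. `S`. -/
def StdU (S : Set (Lit Atom)) : Set Atom := ⋃₀ {U | kb.StdUnfounded S U}

/-- `W_Π(S) = T_Π(S) ∪ ¬.U_Π(S)`. -/
def StdW (S : Set (Lit Atom)) : Set (Lit Atom) :=
  Sum.inl '' kb.StdT S ∪ Sum.inr '' kb.StdU S

/-- The standard well-founded semantics `lfp(W_Π)` of the normal program `Π`. -/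
def stdWfs : Set (Lit Atom) := sInf {S | kb.StdW S ⊆ S}

/-! ### Two-valued satisfaction and well-supported answer sets -/

/-- The theory `L ∪ I|_Ω ∪ ¬.Ī|_Ω` of a total interpretation `I ⊆ HB_Π`. -/
def totTheory (I : Set Atom) : L.Theory :=
  kb.theory ∪ kb.toSent '' {a | a ∈ I ∧ kb.inOmega a} ∪
    (fun a => (kb.toSent a).not) '' {a | a ∉ I ∧ kb.inOmega a}

/-- `I ⊨_L e` for a total interpretation `I` and a body element `e`:
membership for ordinary atoms, entailment from `L ∪ I|_Ω ∪ ¬.Ī|_Ω` for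
FOL-formulas (including non-ordinary atoms). -/
def sat2 (I : Set Atom) : BElem L Atom → Prop
  | .atom a => (¬ kb.inOmega a ∧ a ∈ I) ∨
      (kb.inOmega a ∧ kb.totTheory I ⊨ᵇ kb.toSent a)
  | .fol φ => kb.totTheory I ⊨ᵇ φ

/-- `I ⊨_L body(r)`. -/
def satBody (I : Set Atom) (r : Rule L Atom) : Prop :=
  (∀ e ∈ r.pos, kb.sat2 I e) ∧ (∀ e ∈ r.neg, ¬ kb.sat2 I e)

/-- `I` is a model of `KB`: `I` is consistent with `L` and satisfies all
rules of `Π`. -/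
def IsModel (I : Set Atom) : Prop :=
  (kb.totTheory I).IsSatisfiable ∧
    ∀ r ∈ kb.rules, kb.satBody I r → kb.sat2 I (BElem.atom r.head)

/-- Up-to satisfaction `(E, I) ⊨_L e` of a positive body element. -/
def upSat (E I : Set Atom) (e : BElem L Atom) : Prop :=
  ∀ F : Set Atom, E ⊆ F → F ⊆ I → kb.sat2 F e

/-- `(E, I) ⊨_L body(r)`. -/
def upBody (E I : Set Atom) (r : Rule L Atom) : Prop :=
  (∀ e ∈ r.pos, kb.upSat E I e) ∧
    (∀ e ∈ r.neg, ∀ F : Set Atom, E ⊆ F → F ⊆ I → ¬ kb.sat2 F e)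

/-- `𝒯_KB(E, I) = {head(r) | r ∈ Π, (E, I) ⊨_L body(r)}`. -/
def TcOp (E I : Set Atom) : Set Atom :=
  {H | ∃ r ∈ kb.rules, r.head = H ∧ kb.upBody E I r}

/-- `𝒯^α_KB(∅, I)`: the least fixpoint of `𝒯_KB(·, I)`. -/
def Talpha (I : Set Atom) : Set Atom := sInf {E | kb.TcOp E I ⊆ E}

/-- The theory `L ∪ 𝒯^α_KB(∅, I)|_Ω ∪ ¬.Ī|_Ω`. -/
def wsTheory (I : Set Atom) : L.Theory :=
  kb.theory ∪ kb.toSent '' {a | a ∈ kb.Talpha I ∧ kb.inOmega a} ∪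
    (fun a => (kb.toSent a).not) '' {a | a ∉ I ∧ kb.inOmega a}

/-- `I` is a well-supported answer set of `KB`. -/
def IsWSAnswerSet (I : Set Atom) : Prop :=
  kb.IsModel I ∧ ∀ a ∈ I, a ∈ kb.Talpha I ∨ kb.wsTheory I ⊨ᵇ kb.toSent a

/-- The sequence `𝒯⁰ = ∅`, `𝒯^{k+1} = 𝒯_KB(𝒯^k, I)`. -/
def Titer (I : Set Atom) : ℕ → Set Atom
  | 0 => ∅
  | n + 1 => kb.TcOp (Titer I n) I

/-- The sequence `W⁰ = ∅`, `W^{k+1} = W_KB(W^k)`. -/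
def Witer : ℕ → Set (Lit Atom)
  | 0 => ∅
  | n + 1 => kb.WOp (Witer n)

/-- The sequence `E₀ = ∅`, `E_i = {H ∈ HB_Π | (𝒯^{i-1}, I) ⊨_L H}`. -/
def Eseq (I : Set Atom) : ℕ → Set Atom
  | 0 => ∅
  | n + 1 => {H | kb.upSat (kb.Titer I n) I (BElem.atom H)}

end KB

lemma models_mono {L : FirstOrder.Language} {T T' : L.Theory} {n : ℕ} {α : Type*}
    {φ : L.BoundedFormula α n} (h : T ⊆ T') (hT : T ⊨ᵇ φ) : T' ⊨ᵇ φ :=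
  fun M v xs => hT (M.subtheoryModel h) v xs

lemma extTheory_mono {L : FirstOrder.Language} {Atom : Type*} (kb : KB L Atom)
    {I₁ I₂ : Set (Lit Atom)} (h : I₁ ⊆ I₂) : kb.extTheory I₁ ⊆ kb.extTheory I₂ := by
  apply Set.union_subset_union_right
  apply Set.union_subset_union <;> apply Set.image_mono <;>
    exact fun a ha => ⟨h ha.1, ha.2⟩

lemma consistentWith_anti {L : FirstOrder.Language} {Atom : Type*} (kb : KB L Atom)
    {I₁ I₂ : Set (Lit Atom)} (h : I₁ ⊆ I₂) (hc : kb.ConsistentWith I₂) :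
    kb.ConsistentWith I₁ := by
  refine ⟨?_, hc.2.mono (extTheory_mono kb h)⟩
  have := hc.1
  rw [LitConsistent, Set.eq_empty_iff_forall_notMem] at this ⊢
  exact fun a ha => this a ⟨h ha.1, h ha.2⟩

lemma TOp_mono {L : FirstOrder.Language} {Atom : Type*} (kb : KB L Atom)
    {I₁ I₂ : Set (Lit Atom)} (h : I₁ ⊆ I₂) : kb.TOp I₁ ⊆ kb.TOp I₂ := by
  intro H hH
  rcases hH with hc | ⟨r, hr, hhead, hp, hn, hfp, hfn⟩ | hent
  · exact Or.inl (fun hc2 => hc (consistentWith_anti kb h hc2))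
  · refine Or.inr (Or.inl ⟨r, hr, hhead, fun a ha hna => h (hp a ha hna),
      fun a ha hna => h (hn a ha hna),
      fun φ hφ => models_mono (extTheory_mono kb h) (hfp φ hφ),
      fun φ hφ S hS hIS => hfn φ hφ S hS (h.trans hIS)⟩)
  · exact Or.inr (Or.inr (models_mono (extTheory_mono kb h) hent))

lemma UOp_mono {L : FirstOrder.Language} {Atom : Type*} (kb : KB L Atom)
    {I₁ I₂ : Set (Lit Atom)} (h : I₁ ⊆ I₂) : kb.UOp I₁ ⊆ kb.UOp I₂ := by
  intro a ⟨U, hU, haU⟩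
  by_cases hc2 : kb.ConsistentWith I₂
  · rcases hU with ⟨hc1, hcond⟩ | ⟨hnc1, _⟩
    · refine ⟨U, Or.inl ⟨hc2, fun H hH => ?_⟩, haU⟩
      obtain ⟨ha, hb⟩ := hcond H hH
      refine ⟨fun r hr hhead => ?_, fun S hS hsub => hb S hS
        ((Set.union_subset_union_left _ h).trans hsub)⟩
      rcases ha r hr hhead with ⟨x, hx1, hx2, hx3 | hx3⟩ | hii | ⟨φ, hφ, hiii⟩ | ⟨φ, hφ, hiv⟩
      · exact Or.inl ⟨x, hx1, hx2, Or.inl (h hx3)⟩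
      · exact Or.inl ⟨x, hx1, hx2, Or.inr hx3⟩
      · obtain ⟨b, hb1, hb2, hb3⟩ := hii
        exact Or.inr (Or.inl ⟨b, hb1, hb2, h hb3⟩)
      · exact Or.inr (Or.inr (Or.inl ⟨φ, hφ, fun S hS hsub =>
          hiii S hS ((Set.union_subset_union_left _ h).trans hsub)⟩))
      · exact Or.inr (Or.inr (Or.inr ⟨φ, hφ, models_mono (extTheory_mono kb h) hiv⟩))
    · exact absurd (consistentWith_anti kb h hc2) hnc1
  · exact ⟨Set.univ, Or.inr ⟨hc2, rfl⟩, Set.mem_univ a⟩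

lemma ZOp_mono {L : FirstOrder.Language} {Atom : Type*} (kb : KB L Atom)
    {I₁ I₂ : Set (Lit Atom)} (h : I₁ ⊆ I₂) : kb.ZOp I₁ ⊆ kb.ZOp I₂ :=
  fun _ ha => models_mono (extTheory_mono kb h) ha

/-- `W_KB` is monotone on the complete lattice `(2^{Lit_Π}, ⊆)`,
hence its least fixpoint (the well-founded semantics of `KB`) exists. -/
theorem WOp_monotone_lfp_exists {L : FirstOrder.Language} {Atom : Type*}
    (kb : KB L Atom) :
    (∀ I₁ I₂ : Set (Lit Atom), I₁ ⊆ I₂ → kb.WOp I₁ ⊆ kb.WOp I₂) ∧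
      ∃ I : Set (Lit Atom), kb.WOp I = I ∧
        ∀ J : Set (Lit Atom), kb.WOp J = J → I ⊆ J := by
  have hmono : ∀ I₁ I₂ : Set (Lit Atom), I₁ ⊆ I₂ → kb.WOp I₁ ⊆ kb.WOp I₂ := by
    intro I₁ I₂ h
    apply Set.union_subset_union
    apply Set.union_subset_union
    · exact Set.image_mono (TOp_mono kb h)
    · exact Set.image_mono (UOp_mono kb h)
    · exact Set.image_mono (ZOp_mono kb h)
  refine ⟨hmono, ?_⟩
  let f : Set (Lit Atom) →o Set (Lit Atom) := ⟨kb.WOp, fun _ _ h => hmono _ _ h⟩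
  obtain ⟨hfix, hleast⟩ := OrderHom.isLeast_lfp f
  exact ⟨OrderHom.lfp f, hfix, fun J hJ => hleast hJ⟩


end FOLProg
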